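/- Let α ∈ (0,1), B ≥ 1, and suppose k := ⌊(B+1)α⌋ - 1 satisfies 0 ≤ k ≤ B - 1. Then for every q ∈ [0,1], q·C(B,k)·q^k·(1-q)^{B-k} ≤ (1/√(2π(B+1)))·√(α/(1-α)). -/

import Mathlib

open Real

private lemma stirling_ge (n : ℕ) (hn : 1 ≤ n) : Real.sqrt π ≤ Stirling.stirlingSeq n := by
  obtain ⟨n', rfl⟩ : ∃ n', n = n' + 1 := ⟨n - 1, by omega⟩
  have h : Filter.Tendsto (Stirling.stirlingSeq ∘ Nat.succ) Filter.atTop (nhds (Real.sqrt π)) :=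
    Stirling.tendsto_stirlingSeq_sqrt_pi.comp (Filter.tendsto_add_atTop_nat 1)
  exact Stirling.stirlingSeq'_antitone.le_of_tendsto h n'

private lemma stirling_anti {a b : ℕ} (ha : 1 ≤ a) (hab : a ≤ b) :
    Stirling.stirlingSeq b ≤ Stirling.stirlingSeq a := by
  obtain ⟨a', rfl⟩ : ∃ a', a = a' + 1 := ⟨a - 1, by omega⟩
  obtain ⟨b', rfl⟩ : ∃ b', b = b' + 1 := ⟨b - 1, by omega⟩
  exact Stirling.stirlingSeq'_antitone (by omega : a' ≤ b')

private lemma fact_eq (n : ℕ) (hn : 1 ≤ n) :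
    (n.factorial : ℝ) = Stirling.stirlingSeq n * (Real.sqrt (2 * n) * ((n : ℝ) / Real.exp 1) ^ n) := by
  have hn' : (0 : ℝ) < n := by exact_mod_cast hn
  have h1 : (0 : ℝ) < Real.sqrt (2 * n) := Real.sqrt_pos.mpr (by linarith)
  have h2 : (0 : ℝ) < ((n : ℝ) / Real.exp 1) ^ n := pow_pos (div_pos hn' (Real.exp_pos 1)) n
  rw [Stirling.stirlingSeq, div_mul_cancel₀]
  positivity

/-- Stirling bound on the binomial at its mode. -/
private lemma stirling_binom (j m : ℕ) (hj : 1 ≤ j) (hm : 1 ≤ m) :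
    ((j + m).choose j : ℝ) * ((j : ℝ) / ((j : ℝ) + m)) ^ j * ((m : ℝ) / ((j : ℝ) + m)) ^ m
      ≤ Real.sqrt (((j : ℝ) + m) / (2 * π * j * m)) := by
  have hj' : (0 : ℝ) < j := by exact_mod_cast hj
  have hm' : (0 : ℝ) < m := by exact_mod_cast hm
  have hn' : (0 : ℝ) < (j : ℝ) + m := by linarith
  have haj : 0 < Stirling.stirlingSeq j := by
    obtain ⟨a', rfl⟩ : ∃ a', j = a' + 1 := ⟨j - 1, by omega⟩
    exact Stirling.stirlingSeq'_pos a'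
  have ham : 0 < Stirling.stirlingSeq m := by
    obtain ⟨a', rfl⟩ : ∃ a', m = a' + 1 := ⟨m - 1, by omega⟩
    exact Stirling.stirlingSeq'_pos a'
  have han : 0 < Stirling.stirlingSeq (j + m) := by
    obtain ⟨a', ha'⟩ : ∃ a', j + m = a' + 1 := ⟨j + m - 1, by omega⟩
    rw [ha']; exact Stirling.stirlingSeq'_pos a'
  have hcast : ((j + m).choose j : ℝ) = ((j + m).factorial : ℝ) / ((j.factorial : ℝ) * (m.factorial : ℝ)) := by
    have h := Nat.cast_choose ℝ (Nat.le_add_right j m)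
    rwa [Nat.add_sub_cancel_left] at h
  have ej := fact_eq j hj
  have em := fact_eq m hm
  have en := fact_eq (j + m) (by omega)
  have hsj : (0 : ℝ) < Real.sqrt (2 * j) := Real.sqrt_pos.mpr (by linarith)
  have hsm : (0 : ℝ) < Real.sqrt (2 * m) := Real.sqrt_pos.mpr (by linarith)
  have hsn : (0 : ℝ) < Real.sqrt (2 * ((j : ℝ) + m)) := Real.sqrt_pos.mpr (by linarith)
  have hE : (0 : ℝ) < Real.exp 1 := Real.exp_pos 1
  -- main algebraic identity
  have key : ((j + m).choose j : ℝ) * ((j : ℝ) / ((j : ℝ) + m)) ^ j * ((m : ℝ) / ((j : ℝ) + m)) ^ m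
      = (Stirling.stirlingSeq (j + m) / (Stirling.stirlingSeq j * Stirling.stirlingSeq m))
        * (Real.sqrt (2 * ((j : ℝ) + m)) / (Real.sqrt (2 * j) * Real.sqrt (2 * m))) := by
    rw [hcast, ej, em, en]
    push_cast
    field_simp
    rw [pow_add, div_pow, div_pow, div_pow, div_pow, div_pow, div_pow]
    field_simp
  rw [key]
  -- bound the stirling ratio
  have hpi : (0 : ℝ) < Real.sqrt π := Real.sqrt_pos.mpr Real.pi_pos
  have hratio : Stirling.stirlingSeq (j + m) / (Stirling.stirlingSeq j * Stirling.stirlingSeq m)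
      ≤ (Real.sqrt π)⁻¹ := by
    have h1 : Stirling.stirlingSeq (j + m) ≤ Stirling.stirlingSeq j :=
      stirling_anti hj (Nat.le_add_right j m)
    have h2 : Real.sqrt π ≤ Stirling.stirlingSeq m := stirling_ge m hm
    rw [div_le_iff₀ (by positivity)]
    calc Stirling.stirlingSeq (j + m) ≤ Stirling.stirlingSeq j := h1
      _ = (Real.sqrt π)⁻¹ * (Stirling.stirlingSeq j * Real.sqrt π) := by
          field_simp
      _ ≤ (Real.sqrt π)⁻¹ * (Stirling.stirlingSeq j * Stirling.stirlingSeq m) := by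
          apply mul_le_mul_of_nonneg_left _ (by positivity)
          exact mul_le_mul_of_nonneg_left h2 haj.le
  -- rewrite the sqrt part
  have hsqrt : Real.sqrt (2 * ((j : ℝ) + m)) / (Real.sqrt (2 * j) * Real.sqrt (2 * m))
      = Real.sqrt ((2 * ((j : ℝ) + m)) / ((2 * j) * (2 * m))) := by
    rw [Real.sqrt_div (by positivity : (0:ℝ) ≤ 2 * ((j : ℝ) + m)),
      Real.sqrt_mul (by positivity : (0:ℝ) ≤ 2 * (j : ℝ)) (2 * (m : ℝ))]
  have hfin : (Real.sqrt π)⁻¹ * Real.sqrt ((2 * ((j : ℝ) + m)) / ((2 * j) * (2 * m)))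
      = Real.sqrt (((j : ℝ) + m) / (2 * π * j * m)) := by
    rw [← Real.sqrt_inv, ← Real.sqrt_mul (by positivity)]
    congr 1
    have hπ := Real.pi_pos
    field_simp
  calc Stirling.stirlingSeq (j + m) / (Stirling.stirlingSeq j * Stirling.stirlingSeq m)
        * (Real.sqrt (2 * ((j : ℝ) + m)) / (Real.sqrt (2 * j) * Real.sqrt (2 * m)))
      ≤ (Real.sqrt π)⁻¹ * (Real.sqrt (2 * ((j : ℝ) + m)) / (Real.sqrt (2 * j) * Real.sqrt (2 * m))) := by
        apply mul_le_mul_of_nonneg_right hratio (by positivity)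
    _ = Real.sqrt (((j : ℝ) + m) / (2 * π * j * m)) := by rw [hsqrt, hfin]

/-- AM-GM: the mode maximizes `q^j (1-q)^m`. -/
private lemma pow_mul_pow_le (j m : ℕ) (hj : 1 ≤ j) (hm : 1 ≤ m) (q : ℝ)
    (h0 : 0 ≤ q) (h1 : q ≤ 1) :
    q ^ j * (1 - q) ^ m ≤ ((j : ℝ) / ((j : ℝ) + m)) ^ j * ((m : ℝ) / ((j : ℝ) + m)) ^ m := by
  have hj' : (0 : ℝ) < j := by exact_mod_cast hj
  have hm' : (0 : ℝ) < m := by exact_mod_cast hm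
  have hn' : (0 : ℝ) < (j : ℝ) + m := by linarith
  set w₁ : ℝ := (j : ℝ) / ((j : ℝ) + m) with hw₁
  set w₂ : ℝ := (m : ℝ) / ((j : ℝ) + m) with hw₂
  set p₁ : ℝ := q * (((j : ℝ) + m) / j) with hp₁
  set p₂ : ℝ := (1 - q) * (((j : ℝ) + m) / m) with hp₂
  have hp₁0 : 0 ≤ p₁ := by positivity
  have hp₂0 : 0 ≤ p₂ := by
    have : (0 : ℝ) ≤ 1 - q := by linarith
    positivity
  have hAM : p₁ ^ w₁ * p₂ ^ w₂ ≤ w₁ * p₁ + w₂ * p₂ :=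
    Real.geom_mean_le_arith_mean2_weighted (by positivity) (by positivity) hp₁0 hp₂0
      (by rw [hw₁, hw₂]; field_simp)
  have hsum : w₁ * p₁ + w₂ * p₂ = 1 := by
    rw [hw₁, hw₂, hp₁, hp₂]
    field_simp
    ring
  rw [hsum] at hAM
  have hpow : (p₁ ^ w₁ * p₂ ^ w₂) ^ (j + m) ≤ 1 :=
    pow_le_one₀ (by positivity) hAM
  have e₁ : (p₁ ^ w₁) ^ (j + m) = p₁ ^ j := by
    rw [← Real.rpow_natCast (p₁ ^ w₁) (j + m), ← Real.rpow_mul hp₁0]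
    have : w₁ * ((j + m : ℕ) : ℝ) = (j : ℕ) := by
      rw [hw₁]; push_cast; field_simp
    rw [this, Real.rpow_natCast]
  have e₂ : (p₂ ^ w₂) ^ (j + m) = p₂ ^ m := by
    rw [← Real.rpow_natCast (p₂ ^ w₂) (j + m), ← Real.rpow_mul hp₂0]
    have : w₂ * ((j + m : ℕ) : ℝ) = (m : ℕ) := by
      rw [hw₂]; push_cast; field_simp
    rw [this, Real.rpow_natCast]
  rw [mul_pow, e₁, e₂] at hpow
  have hexp : p₁ ^ j * p₂ ^ m
      = (q ^ j * (1 - q) ^ m) * ((((j : ℝ) + m) / j) ^ j * (((j : ℝ) + m) / m) ^ m) := by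
    rw [hp₁, hp₂, mul_pow, mul_pow]; ring
  rw [hexp] at hpow
  have hA : (0 : ℝ) < (((j : ℝ) + m) / j) ^ j * (((j : ℝ) + m) / m) ^ m := by positivity
  have := (le_div_iff₀ hA).mpr hpow
  calc q ^ j * (1 - q) ^ m ≤ 1 / ((((j : ℝ) + m) / j) ^ j * (((j : ℝ) + m) / m) ^ m) := this
    _ = ((j : ℝ) / ((j : ℝ) + m)) ^ j * ((m : ℝ) / ((j : ℝ) + m)) ^ m := by
        rw [one_div, mul_inv, ← inv_pow, ← inv_pow, inv_div, inv_div]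

/-- For α ∈ (0,1), B ≥ 1, and k = ⌊(B+1)α⌋ - 1 with 0 ≤ k ≤ B-1: for every
q ∈ [0,1], q·C(B,k)·q^k·(1-q)^{B-k} ≤ (1/√(2π(B+1)))·√(α/(1-α)). -/
theorem stmt_17 (α : ℝ) (hα0 : 0 < α) (hα1 : α < 1) (B : ℕ) (hB : 1 ≤ B)
    (k : ℕ) (hk : (k : ℤ) = ⌊((B : ℝ) + 1) * α⌋ - 1) (hkB : k ≤ B - 1) :
    ∀ q ∈ Set.Icc (0 : ℝ) 1,
      q * ((B.choose k : ℝ) * q ^ k * (1 - q) ^ (B - k)) ≤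
        (1 / Real.sqrt (2 * π * ((B : ℝ) + 1))) * Real.sqrt (α / (1 - α)) := by
  intro q hq
  obtain ⟨hq0, hq1⟩ := hq
  have hkB' : k + 1 ≤ B := by omega
  set j : ℕ := k + 1 with hjdef
  set m : ℕ := B - k with hmdef
  have hj1 : 1 ≤ j := by omega
  have hm1 : 1 ≤ m := by omega
  have hjm : j + m = B + 1 := by omega
  have hj' : (0 : ℝ) < j := by exact_mod_cast hj1
  have hm' : (0 : ℝ) < m := by exact_mod_cast hm1
  have hjr : (j : ℝ) = (k : ℝ) + 1 := by rw [hjdef]; push_cast; ring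
  have hmr : (m : ℝ) = (B : ℝ) - k := by rw [hmdef, Nat.cast_sub (by omega : k ≤ B)]
  have hncast : (j : ℝ) + m = (B : ℝ) + 1 := by rw [hjr, hmr]; ring
  have hn' : (0 : ℝ) < (j : ℝ) + m := by linarith [hj', hm']
  have hπ := Real.pi_pos
  -- floor bound: j ≤ (B+1)α
  have hfloor : (j : ℝ) ≤ ((B : ℝ) + 1) * α := by
    have hZ : (⌊((B : ℝ) + 1) * α⌋ : ℤ) = (k : ℤ) + 1 := by omega
    have h2 := Int.floor_le (((B : ℝ) + 1) * α)
    rw [hZ] at h2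
    push_cast at h2
    rw [hjr]
    linarith
  -- step 1 : rearrange
  have step1 : q * ((B.choose k : ℝ) * q ^ k * (1 - q) ^ (B - k))
      = (B.choose k : ℝ) * (q ^ j * (1 - q) ^ m) := by
    rw [hjdef, pow_succ]; ring
  -- step 2 : AM-GM
  have step2 : (B.choose k : ℝ) * (q ^ j * (1 - q) ^ m)
      ≤ (B.choose k : ℝ) * (((j : ℝ) / ((j : ℝ) + m)) ^ j * ((m : ℝ) / ((j : ℝ) + m)) ^ m) :=
    mul_le_mul_of_nonneg_left (pow_mul_pow_le j m hj1 hm1 q hq0 hq1) (by positivity)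
  -- choose identity: (B+1) * C(B,k) = C(B+1, k+1) * (k+1)
  have hchoose : (B.choose k : ℝ) = ((j : ℝ) / ((j : ℝ) + m)) * ((j + m).choose j : ℝ) := by
    have h := Nat.add_one_mul_choose_eq B k
    have hBj : (B + 1).choose (k + 1) = (j + m).choose j := by rw [hjm, hjdef]
    have h' : ((B : ℝ) + 1) * (B.choose k : ℝ) = ((j + m).choose j : ℝ) * ((k : ℝ) + 1) := by
      rw [← hBj]; exact_mod_cast congrArg (Nat.cast : ℕ → ℝ) h
    rw [eq_comm, div_mul_eq_mul_div, div_eq_iff (ne_of_gt hn'), hncast, hjr]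
    linarith
  -- step 3 : Stirling bound
  have step3 : (B.choose k : ℝ) * (((j : ℝ) / ((j : ℝ) + m)) ^ j * ((m : ℝ) / ((j : ℝ) + m)) ^ m)
      ≤ ((j : ℝ) / ((j : ℝ) + m)) * Real.sqrt (((j : ℝ) + m) / (2 * π * j * m)) := by
    rw [hchoose]
    have hb := stirling_binom j m hj1 hm1
    calc ((j : ℝ) / ((j : ℝ) + m)) * ((j + m).choose j : ℝ)
          * (((j : ℝ) / ((j : ℝ) + m)) ^ j * ((m : ℝ) / ((j : ℝ) + m)) ^ m)
        = ((j : ℝ) / ((j : ℝ) + m)) * (((j + m).choose j : ℝ)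
            * ((j : ℝ) / ((j : ℝ) + m)) ^ j * ((m : ℝ) / ((j : ℝ) + m)) ^ m) := by ring
      _ ≤ ((j : ℝ) / ((j : ℝ) + m)) * Real.sqrt (((j : ℝ) + m) / (2 * π * j * m)) := by
          apply mul_le_mul_of_nonneg_left hb (by positivity)
  -- step 4 : simplify
  have step4 : ((j : ℝ) / ((j : ℝ) + m)) * Real.sqrt (((j : ℝ) + m) / (2 * π * j * m))
      = Real.sqrt ((j : ℝ) / (2 * π * ((j : ℝ) + m) * m)) := by
    rw [← Real.sqrt_sq (le_of_lt (div_pos hj' hn')), ← Real.sqrt_mul (by positivity)]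
    congr 1
    field_simp
  -- step 5 : compare with RHS
  have hRHS : (1 / Real.sqrt (2 * π * ((B : ℝ) + 1))) * Real.sqrt (α / (1 - α))
      = Real.sqrt (α / (2 * π * ((B : ℝ) + 1) * (1 - α))) := by
    rw [one_div, ← Real.sqrt_inv, ← Real.sqrt_mul (by positivity)]
    congr 1
    have h1α : (0 : ℝ) < 1 - α := by linarith
    field_simp
  have step5 : Real.sqrt ((j : ℝ) / (2 * π * ((j : ℝ) + m) * m))
      ≤ Real.sqrt (α / (2 * π * ((B : ℝ) + 1) * (1 - α))) := by
    apply Real.sqrt_le_sqrt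
    rw [hncast]
    have h1α : (0 : ℝ) < 1 - α := by linarith
    rw [div_le_div_iff₀ (by positivity) (by positivity)]
    have hcore : (j : ℝ) * (1 - α) ≤ α * m := by
      have hmr : (m : ℝ) = (B : ℝ) + 1 - j := by linarith [hncast]
      nlinarith [hfloor]
    nlinarith [mul_le_mul_of_nonneg_left hcore (by positivity : (0:ℝ) ≤ 2 * π * ((B : ℝ) + 1))]
  rw [step1, hRHS]
  calc (B.choose k : ℝ) * (q ^ j * (1 - q) ^ m)
      ≤ (B.choose k : ℝ) * (((j : ℝ) / ((j : ℝ) + m)) ^ j * ((m : ℝ) / ((j : ℝ) + m)) ^ m) := step2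
    _ ≤ ((j : ℝ) / ((j : ℝ) + m)) * Real.sqrt (((j : ℝ) + m) / (2 * π * j * m)) := step3
    _ = Real.sqrt ((j : ℝ) / (2 * π * ((j : ℝ) + m) * m)) := step4
    _ ≤ Real.sqrt (α / (2 * π * ((B : ℝ) + 1) * (1 - α))) := step5
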